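/- Let M = (−∞, 0] ⊂ ℝ, f(x) = −x, and u(x) = −e^{−x}. Then Δ_f u = u'' + u' = 0 on M, Ric_f = f'' = 0, the weighted mean curvature at the boundary point 0 is H_f = 1, the outer normal derivative u_ν at 0 equals 1 (hence nonnegative), but u is unbounded below on M and non-constant. -/

import Mathlib

/-- On `M = (-∞, 0]` with `f(x) = -x` and `u(x) = -e^{-x}`: `Δ_f u = u'' + u' = 0`,
`Ric_f = f'' = 0`, `H_f = -f'(0) = 1`, `u_ν = u'(0) = 1 ≥ 0`, but `u` is unbounded
below on `M` and non-constant. -/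
theorem unbounded_counterexample_halfline (f u : ℝ → ℝ)
    (hf : f = fun x => -x) (hu : u = fun x => -Real.exp (-x)) :
    (∀ x ≤ (0 : ℝ), deriv (deriv u) x - deriv f x * deriv u x = 0) ∧
    (∀ x ≤ (0 : ℝ), deriv (deriv u) x + deriv u x = 0) ∧
    (∀ x ≤ (0 : ℝ), deriv (deriv f) x = 0) ∧
    (-(deriv f 0) * 1 = 1) ∧
    (deriv u 0 * 1 = 1) ∧
    (∀ C : ℝ, ∃ x ≤ (0 : ℝ), u x < C) ∧
    (∃ a ≤ (0 : ℝ), ∃ b ≤ (0 : ℝ), u a ≠ u b) := by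
  subst hf hu
  have h1 : ∀ x : ℝ, HasDerivAt (fun x => -Real.exp (-x)) (Real.exp (-x)) x := by
    intro x
    have := ((Real.hasDerivAt_exp (-x)).comp x (hasDerivAt_neg x)).neg
    simpa [Function.comp_def, Pi.neg_def] using this
  have hdu : deriv (fun x => -Real.exp (-x)) = fun x => Real.exp (-x) :=
    funext fun x => (h1 x).deriv
  have h2 : ∀ x : ℝ, HasDerivAt (fun x => Real.exp (-x)) (-Real.exp (-x)) x := by
    intro x
    have := (Real.hasDerivAt_exp (-x)).comp x (hasDerivAt_neg x)
    simpa [Function.comp_def, Pi.neg_def] using this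
  have hddu : deriv (deriv (fun x => -Real.exp (-x))) = fun x => -Real.exp (-x) := by
    rw [hdu]; exact funext fun x => (h2 x).deriv
  have hdf : deriv (fun x : ℝ => -x) = fun _ : ℝ => (-1 : ℝ) := by
    funext x; simpa using (hasDerivAt_neg x).deriv
  refine ⟨?_, ?_, ?_, ?_, ?_, ?_, ?_⟩
  · intro x _; rw [hddu, hdu, hdf]; ring
  · intro x _; rw [hddu, hdu]; ring
  · intro x _; rw [hdf]; simp
  · rw [hdf]; ring
  · rw [hdu]; simp
  · intro C
    refine ⟨-(|C| + 1), by nlinarith [abs_nonneg C], ?_⟩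
    have h1 : |C| + 1 + 1 ≤ Real.exp (|C| + 1) := Real.add_one_le_exp _
    have h2 : -C ≤ |C| := neg_le_abs C
    simp only [neg_neg]
    nlinarith
  · refine ⟨0, le_refl 0, -1, by norm_num, ?_⟩
    simp only [neg_neg, ne_eq, neg_inj]
    intro h
    have := Real.exp_injective h
    norm_num at this
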